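/- Let G₁ and G₂ be graphs, and let k = od(G₂) be the orthogonality dimension of G₂ over ℝ. Then the orthogonality dimension of the lexicographic product G₁ • G₂ equals the k-subspace orthogonality dimension of G₁: od(G₁ • G₂) = od_k(G₁). -/

import Mathlib

open Matrix

/-- The lexicographic product of two simple graphs. -/
def lexProd {V₁ V₂ : Type} (G₁ : SimpleGraph V₁) (G₂ : SimpleGraph V₂) :
    SimpleGraph (V₁ × V₂) where
  Adj p q := G₁.Adj p.1 q.1 ∨ (p.1 = q.1 ∧ G₂.Adj p.2 q.2)
  symm := by
    refine ⟨?_⟩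
    rintro p q (h | ⟨h1, h2⟩)
    · exact Or.inl h.symm
    · exact Or.inr ⟨h1.symm, h2.symm⟩
  loopless := by
    refine ⟨?_⟩
    rintro p (h | ⟨-, h⟩)
    · exact G₁.irrefl h
    · exact G₂.irrefl h

/-- The orthogonality dimension of a graph over ℝ. -/
noncomputable def odG {V : Type} (G : SimpleGraph V) : ℕ :=
  sInf {t | ∃ u : V → Fin t → ℝ, (∀ v, u v ≠ 0) ∧
    ∀ v v', G.Adj v v' → u v ⬝ᵥ u v' = 0}

/-- The `k`-subspace orthogonality dimension of a graph. -/
noncomputable def odk {V : Type} (k : ℕ) (G : SimpleGraph V) : ℕ :=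
  sInf {t | ∃ U : V → Submodule ℝ (Fin t → ℝ),
    (∀ v, Module.finrank ℝ (U v) = k) ∧
    ∀ v v', G.Adj v v' → ∀ x ∈ U v, ∀ y ∈ U v', x ⬝ᵥ y = 0}

lemma exists_isometric_param {t d : ℕ} (S : Submodule ℝ (Fin t → ℝ))
    (hd : Module.finrank ℝ S = d) :
    ∃ B : (Fin d → ℝ) →ₗ[ℝ] (Fin t → ℝ),
      LinearMap.range B = S ∧ ∀ x y, B x ⬝ᵥ B y = x ⬝ᵥ y := by
  let e : EuclideanSpace ℝ (Fin t) ≃ₗ[ℝ] (Fin t → ℝ) := WithLp.linearEquiv 2 ℝ (Fin t → ℝ)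
  let S' : Submodule ℝ (EuclideanSpace ℝ (Fin t)) := S.map e.symm.toLinearMap
  have hS' : Module.finrank ℝ S' = d := by
    rw [← hd]; exact (Submodule.equivMapOfInjective _ e.symm.injective S).finrank_eq.symm
  let b : OrthonormalBasis (Fin d) ℝ S' := (stdOrthonormalBasis ℝ S').reindex (finCongr hS')
  let B : (Fin d → ℝ) →ₗ[ℝ] (Fin t → ℝ) :=
    e.toLinearMap ∘ₗ S'.subtype ∘ₗ b.repr.symm.toLinearEquiv.toLinearMap ∘ₗ
      (WithLp.linearEquiv 2 ℝ (Fin d → ℝ)).symm.toLinearMap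
  have hdot : ∀ {n : ℕ} (v w : EuclideanSpace ℝ (Fin n)),
      (WithLp.ofLp v) ⬝ᵥ (WithLp.ofLp w) = @inner ℝ _ _ v w := by
    intro n v w
    simp [dotProduct, PiLp.inner_apply, mul_comm]
  refine ⟨B, ?_, ?_⟩
  · simp only [B, LinearMap.range_comp, LinearEquiv.range, Submodule.map_top,
      Submodule.range_subtype, S']
    rw [← Submodule.map_comp]
    simp
  · intro x y
    have := hdot (S'.subtype (b.repr.symm (WithLp.toLp 2 x))) (S'.subtype (b.repr.symm (WithLp.toLp 2 y)))
    have h2 := hdot (WithLp.toLp 2 x) (WithLp.toLp 2 y)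
    simp only [Submodule.subtype_apply] at this h2
    rw [← Submodule.coe_inner, LinearIsometryEquiv.inner_map_map] at this
    rw [h2, ← this]
    rfl

lemma span_dot_zero {t : ℕ} {s s' : Set (Fin t → ℝ)}
    (h : ∀ a ∈ s, ∀ b ∈ s', a ⬝ᵥ b = 0) :
    ∀ x ∈ Submodule.span ℝ s, ∀ y ∈ Submodule.span ℝ s', x ⬝ᵥ y = 0 := by
  intro x hx
  induction hx using Submodule.span_induction with
  | mem a ha =>
    intro y hy
    induction hy using Submodule.span_induction with
    | mem b hb => exact h a ha b hb
    | zero => simp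
    | add b c _ _ h1 h2 => rw [dotProduct_add, h1, h2, add_zero]
    | smul r b _ h1 => rw [dotProduct_smul, h1, smul_zero]
  | zero => intro y hy; simp
  | add a b _ _ h1 h2 => intro y hy; rw [add_dotProduct, h1 y hy, h2 y hy, add_zero]
  | smul r a _ h1 => intro y hy; rw [smul_dotProduct, h1 y hy, smul_zero]

lemma exists_sub_of_le_finrank {t k : ℕ} (S : Submodule ℝ (Fin t → ℝ))
    (h : k ≤ Module.finrank ℝ S) :
    ∃ U : Submodule ℝ (Fin t → ℝ), U ≤ S ∧ Module.finrank ℝ U = k := by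
  obtain ⟨f, hf⟩ := exists_linearIndependent_of_le_finrank h
  have hf' : LinearIndependent ℝ (S.subtype ∘ f) := hf.map' S.subtype S.ker_subtype
  refine ⟨Submodule.span ℝ (Set.range (S.subtype ∘ f)), ?_, ?_⟩
  · rw [Submodule.span_le]; rintro _ ⟨i, rfl⟩; exact (f i).2
  · rw [finrank_span_eq_card hf', Fintype.card_fin]

lemma odG_set_nonempty {V : Type} [Fintype V] (G : SimpleGraph V) :
    {t | ∃ u : V → Fin t → ℝ, (∀ v, u v ≠ 0) ∧
      ∀ v v', G.Adj v v' → u v ⬝ᵥ u v' = 0}.Nonempty := by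
  classical
  obtain ⟨e⟩ := (Fintype.truncEquivFin V).nonempty
  refine ⟨Fintype.card V, fun v => Pi.single (e v) 1, fun v hz => ?_, fun v v' h => ?_⟩
  · have := congrFun hz (e v)
    simp at this
  · simp only [single_dotProduct, one_mul, Pi.single_apply]
    rw [if_neg (fun he => h.ne (e.injective he))]

/-- od(G₁ • G₂) = od_k(G₁) where k = od(G₂). -/
theorem od_lexProd {V₁ V₂ : Type} [Fintype V₁] [Fintype V₂]
    (G₁ : SimpleGraph V₁) (G₂ : SimpleGraph V₂) :
    odG (lexProd G₁ G₂) = odk (odG G₂) G₁ := by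
  classical
  unfold odG odk
  congr 1
  ext t
  simp only [Set.mem_setOf_eq]
  constructor
  · rintro ⟨w, hw0, hwo⟩
    have key : ∀ v₁ : V₁, odG G₂ ≤
        Module.finrank ℝ (Submodule.span ℝ (Set.range fun v₂ => w (v₁, v₂))) := by
      intro v₁
      set S := Submodule.span ℝ (Set.range fun v₂ => w (v₁, v₂)) with hS
      obtain ⟨B, hBr, hBd⟩ := exists_isometric_param S rfl
      have hmem : ∀ v₂, w (v₁, v₂) ∈ LinearMap.range B := by
        rw [hBr, hS]; exact fun v₂ => Submodule.subset_span ⟨v₂, rfl⟩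
      choose u hu using hmem
      apply Nat.sInf_le
      refine ⟨u, fun v₂ hz => hw0 (v₁, v₂) ?_, fun a b hab => ?_⟩
      · rw [← hu v₂, hz, map_zero]
      · have : B (u a) ⬝ᵥ B (u b) = 0 := by
          rw [hu a, hu b]
          exact hwo (v₁, a) (v₁, b) (Or.inr ⟨rfl, hab⟩)
        rwa [hBd] at this
    choose U hU1 hU2 using fun v₁ => exists_sub_of_le_finrank _ (key v₁)
    refine ⟨U, hU2, fun v v' hadj x hx y hy => ?_⟩
    refine span_dot_zero (fun a ha b hb => ?_) x (hU1 v hx) y (hU1 v' hy)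
    obtain ⟨a₂, rfl⟩ := ha
    obtain ⟨b₂, rfl⟩ := hb
    exact hwo (v, a₂) (v', b₂) (Or.inl hadj)
  · rintro ⟨U, hUd, hUo⟩
    have hk : ∃ u : V₂ → Fin (odG G₂) → ℝ, (∀ v, u v ≠ 0) ∧
        ∀ v v', G₂.Adj v v' → u v ⬝ᵥ u v' = 0 := Nat.sInf_mem (odG_set_nonempty G₂)
    obtain ⟨u, hu0, huo⟩ := hk
    choose B hBr hBd using fun v₁ => exists_isometric_param (U v₁) (hUd v₁)
    refine ⟨fun p => B p.1 (u p.2), fun p hz => hu0 p.2 ?_, ?_⟩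
    · have hz' : B p.1 (u p.2) = 0 := hz
      have h := hBd p.1 (u p.2) (u p.2)
      rw [hz', zero_dotProduct] at h
      exact dotProduct_self_eq_zero.mp h.symm
    · rintro ⟨a₁, a₂⟩ ⟨b₁, b₂⟩ (h | ⟨h1, h2⟩)
      · exact hUo a₁ b₁ h _ (hBr a₁ ▸ LinearMap.mem_range_self _ _)
          _ (hBr b₁ ▸ LinearMap.mem_range_self _ _)
      · cases h1
        refine (hBd a₁ (u a₂) (u b₂)).trans ?_
        exact huo a₂ b₂ h2
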